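/- Let K ⊆ ℝ^(n+m) be a compact regular partially convex set with Y = π_Y(K), and let f ∈ Aff(K_{y₀}) be a nonnegative continuous affine function on the slice K_{y₀} for some y₀ ∈ Y. Then there exists a continuous function G on K, affine in x for each fixed y, such that G ≥ 0 on all of K and G(x, y₀) = f(x) for all x ∈ K_{y₀}. -/

import Mathlib

open Filter Topology

/-- Auxiliary: a function on a set containing a ball `‖v‖ ≤ ρ` around `x₀`,
satisfying the convex-combination identity, agrees on the set with an
affine function. -/
theorem aux_affine_ext {n : ℕ} (S : Set (Fin n → ℝ)) (f : (Fin n → ℝ) → ℝ)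
    (x₀ : Fin n → ℝ) (ρ : ℝ) (hρ : 0 < ρ) (hx₀ : x₀ ∈ S)
    (hball : ∀ v : Fin n → ℝ, ‖v‖ ≤ ρ → x₀ + v ∈ S)
    (haff : ∀ x₁ ∈ S, ∀ x₂ ∈ S, ∀ t ∈ Set.Icc (0:ℝ) 1,
      f (t • x₁ + (1 - t) • x₂) = t * f x₁ + (1 - t) * f x₂) :
    ∃ c : Fin n → ℝ, ∀ x ∈ S, f x = f x₀ + ∑ i, (x i - x₀ i) * c i := by
  classical
  set e : Fin n → (Fin n → ℝ) := fun i => Pi.single i (1:ℝ) with he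
  -- homogeneity on the ball, t ∈ [0,1]
  have ghom : ∀ v : Fin n → ℝ, ‖v‖ ≤ ρ → ∀ t ∈ Set.Icc (0:ℝ) 1,
      f (x₀ + t • v) - f x₀ = t * (f (x₀ + v) - f x₀) := by
    intro v hv t ht
    have h := haff (x₀ + v) (hball v hv) x₀ hx₀ t ht
    have harg : t • (x₀ + v) + (1 - t) • x₀ = x₀ + t • v := by module
    rw [harg] at h
    rw [h]; ring
  -- negation
  have gneg : ∀ v : Fin n → ℝ, ‖v‖ ≤ ρ →
      f (x₀ + (-v)) - f x₀ = -(f (x₀ + v) - f x₀) := by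
    intro v hv
    have hv' : ‖(-v : Fin n → ℝ)‖ ≤ ρ := by rwa [norm_neg]
    have h := haff (x₀ + v) (hball v hv) (x₀ + (-v)) (hball (-v) hv')
      (1/2) ⟨by norm_num, by norm_num⟩
    have harg : (1/2 : ℝ) • (x₀ + v) + (1 - 1/2 : ℝ) • (x₀ + (-v)) = x₀ := by
      norm_num; module
    rw [harg] at h
    have : (1 - 1/2 : ℝ) = 1/2 := by norm_num
    rw [this] at h
    linarith
  -- homogeneity for t ∈ [-1,1]
  have ghomt : ∀ v : Fin n → ℝ, ‖v‖ ≤ ρ → ∀ t : ℝ, |t| ≤ 1 →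
      f (x₀ + t • v) - f x₀ = t * (f (x₀ + v) - f x₀) := by
    intro v hv t ht
    rcases le_or_gt 0 t with h0 | h0
    · exact ghom v hv t ⟨h0, (abs_le.mp ht).2⟩
    · have h1 : t • v = -((-t) • v) := by module
      have h2 : ‖(-t) • v‖ ≤ ρ := by
        rw [norm_smul, norm_neg]
        rw [Real.norm_eq_abs]
        calc |t| * ‖v‖ ≤ 1 * ρ := by
              apply mul_le_mul ht hv (norm_nonneg _) zero_le_one
          _ = ρ := one_mul ρ
      rw [h1, gneg ((-t) • v) h2,
        ghom v hv (-t) ⟨by linarith, by have := (abs_le.mp ht).1; linarith⟩]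
      ring
  -- additivity
  have gadd : ∀ v w : Fin n → ℝ, ‖v‖ ≤ ρ → ‖w‖ ≤ ρ → ‖v + w‖ ≤ ρ →
      f (x₀ + (v + w)) - f x₀ = (f (x₀ + v) - f x₀) + (f (x₀ + w) - f x₀) := by
    intro v w hv hw hvw
    have h := haff (x₀ + v) (hball v hv) (x₀ + w) (hball w hw)
      (1/2) ⟨by norm_num, by norm_num⟩
    have harg : (1/2 : ℝ) • (x₀ + v) + (1 - 1/2 : ℝ) • (x₀ + w)
        = x₀ + (1/2 : ℝ) • (v + w) := by norm_num; module
    rw [harg] at h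
    have h2 := ghom (v + w) hvw (1/2) ⟨by norm_num, by norm_num⟩
    rw [h] at h2
    linarith
  -- the coefficients
  set c : Fin n → ℝ := fun i => (f (x₀ + ρ • e i) - f x₀) / ρ with hc
  refine ⟨c, ?_⟩
  -- norm bound of partial sums
  have hbnd : ∀ (v : Fin n → ℝ), ‖v‖ ≤ ρ → ∀ s : Finset (Fin n),
      ‖∑ i ∈ s, v i • e i‖ ≤ ρ := by
    intro v hv s
    rw [pi_norm_le_iff_of_nonneg hρ.le]
    intro j
    rw [Finset.sum_apply]
    simp only [he, Pi.smul_apply, Pi.single_apply, smul_eq_mul, mul_ite, mul_one, mul_zero]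
    rw [Finset.sum_ite_eq s j (fun i => v i)]
    split
    · exact le_trans (norm_le_pi_norm v j) hv
    · simpa using hρ.le
  -- single terms
  have hsingle : ∀ (v : Fin n → ℝ), ‖v‖ ≤ ρ → ∀ i : Fin n,
      f (x₀ + v i • e i) - f x₀ = v i * c i := by
    intro v hv i
    have hρ' : ‖ρ • e i‖ ≤ ρ := by
      rw [pi_norm_le_iff_of_nonneg hρ.le]
      intro j
      simp only [he, Pi.smul_apply, Pi.single_apply, smul_eq_mul, mul_ite, mul_one, mul_zero]
      split
      · simpa [abs_of_pos hρ] using le_refl ρ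
      · simpa using hρ.le
    have hvi : |v i| ≤ ρ := le_trans (norm_le_pi_norm v i) hv
    have ht : |v i / ρ| ≤ 1 := by
      rw [abs_div, abs_of_pos hρ, div_le_one hρ]
      exact hvi
    have h1 : v i • e i = (v i / ρ) • (ρ • e i) := by
      rw [smul_smul, div_mul_cancel₀]
      exact hρ.ne'
    rw [h1, ghomt (ρ • e i) hρ' (v i / ρ) ht, hc]
    field_simp
  -- sum decomposition by induction
  have gsum : ∀ (v : Fin n → ℝ), ‖v‖ ≤ ρ → ∀ s : Finset (Fin n),
      f (x₀ + ∑ i ∈ s, v i • e i) - f x₀ = ∑ i ∈ s, v i * c i := by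
    intro v hv s
    induction s using Finset.induction_on with
    | empty => simp
    | insert _ _ hi ih =>
      rename_i a s
      rw [Finset.sum_insert hi, Finset.sum_insert hi]
      have h1 : ‖(v a • e a)‖ ≤ ρ := by
        have := hbnd v hv {a}
        simpa using this
      have h2 : ‖∑ i ∈ s, v i • e i‖ ≤ ρ := hbnd v hv s
      have h3 : ‖v a • e a + ∑ i ∈ s, v i • e i‖ ≤ ρ := by
        have := hbnd v hv (insert a s)
        rwa [Finset.sum_insert hi] at this
      rw [gadd _ _ h1 h2 h3, ih, hsingle v hv a]
  -- decomposition of any small v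
  have gdecomp : ∀ (v : Fin n → ℝ), ‖v‖ ≤ ρ →
      f (x₀ + v) - f x₀ = ∑ i, v i * c i := by
    intro v hv
    have hveq : ∑ i, v i • e i = v := by
      have := Finset.univ_sum_single v
      rw [← this]
      congr 1
      ext i j
      simp [he, Pi.single_apply]
    rw [← hveq]
    nth_rewrite 2 [hveq]
    exact gsum v hv Finset.univ
  -- extension to all of S
  intro x hx
  set u : Fin n → ℝ := x - x₀ with hu
  set t : ℝ := min (ρ / (‖u‖ + 1)) 1 with htdef
  have hu1 : (0:ℝ) < ‖u‖ + 1 := by positivity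
  have ht0 : 0 < t := lt_min (by positivity) one_pos
  have ht1 : t ≤ 1 := min_le_right _ _
  have htu : ‖t • u‖ ≤ ρ := by
    rw [norm_smul, Real.norm_eq_abs, abs_of_pos ht0]
    calc t * ‖u‖ ≤ (ρ / (‖u‖ + 1)) * ‖u‖ := by
          apply mul_le_mul_of_nonneg_right (min_le_left _ _) (norm_nonneg _)
      _ ≤ ρ := by
          rw [div_mul_eq_mul_div, div_le_iff₀ hu1]
          nlinarith [norm_nonneg u]
  have key := haff x hx x₀ hx₀ t ⟨ht0.le, ht1⟩
  have harg : t • x + (1 - t) • x₀ = x₀ + t • u := by rw [hu]; module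
  rw [harg] at key
  have hg := gdecomp (t • u) htu
  have hsum : ∑ i, (t • u) i * c i = t * ∑ i, (x i - x₀ i) * c i := by
    rw [Finset.mul_sum]
    apply Finset.sum_congr rfl
    intro i _
    simp only [Pi.smul_apply, hu, Pi.sub_apply, smul_eq_mul]
    ring
  rw [hsum, key] at hg
  have ht0' : t ≠ 0 := ht0.ne'
  have : t * (f x - f x₀) = t * ∑ i, (x i - x₀ i) * c i := by linarith
  have := mul_left_cancel₀ ht0' this
  linarith



/-- On a compact regular partially convex set `K`, every nonnegative continuous
affine function on a slice `K_{y₀}` extends to a continuous function on `K`,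
affine in `x` for each fixed `y`, nonnegative on all of `K`. -/
theorem stmt_16 (n m : ℕ) (K : Set ((Fin n → ℝ) × (Fin m → ℝ)))
    (hKc : IsCompact K) (hKcl : IsClosed K)
    (hconv : ∀ y : Fin m → ℝ, Convex ℝ {x : Fin n → ℝ | (x, y) ∈ K})
    (Y : Set (Fin m → ℝ)) (hY : Y = Prod.snd '' K)
    (hint : ∀ y ∈ Y, (interior {x : Fin n → ℝ | (x, y) ∈ K}).Nonempty)
    (hlhc : ∀ y ∈ Y, ∀ yk : ℕ → (Fin m → ℝ), (∀ k, yk k ∈ Y) →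
      Filter.Tendsto yk Filter.atTop (nhds y) →
      ∀ x ∈ interior {x : Fin n → ℝ | (x, y) ∈ K},
        ∃ xk : ℕ → (Fin n → ℝ),
          (∀ k, xk k ∈ interior {x : Fin n → ℝ | (x, yk k) ∈ K}) ∧
          Filter.Tendsto xk Filter.atTop (nhds x))
    (y₀ : Fin m → ℝ) (hy₀ : y₀ ∈ Y)
    (f : (Fin n → ℝ) → ℝ)
    (hfc : ContinuousOn f {x : Fin n → ℝ | (x, y₀) ∈ K})
    (hfaff : ∀ x₁ x₂ : Fin n → ℝ, (x₁, y₀) ∈ K → (x₂, y₀) ∈ K →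
      ∀ t ∈ Set.Icc (0:ℝ) 1,
        f (t • x₁ + (1 - t) • x₂) = t * f x₁ + (1 - t) * f x₂)
    (hfpos : ∀ x : Fin n → ℝ, (x, y₀) ∈ K → 0 ≤ f x) :
    ∃ G : (Fin n → ℝ) × (Fin m → ℝ) → ℝ,
      ContinuousOn G K ∧
      (∀ (y : Fin m → ℝ) (x₁ x₂ : Fin n → ℝ), (x₁, y) ∈ K → (x₂, y) ∈ K →
        ∀ t ∈ Set.Icc (0:ℝ) 1,
          G (t • x₁ + (1 - t) • x₂, y) = t * G (x₁, y) + (1 - t) * G (x₂, y)) ∧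
      (∀ w ∈ K, 0 ≤ G w) ∧
      (∀ x : Fin n → ℝ, (x, y₀) ∈ K → G (x, y₀) = f x) := by
  classical
  set S : (Fin m → ℝ) → Set (Fin n → ℝ) := fun y => {x | (x, y) ∈ K} with hSdef
  -- basic facts about slices
  have hScl : ∀ y, IsClosed (S y) := by
    intro y
    have : Continuous (fun x : Fin n → ℝ => (x, y)) := by fun_prop
    exact hKcl.preimage this
  have hScomp : ∀ y, IsCompact (S y) := by
    intro y
    refine (hKc.image continuous_fst).of_isClosed_subset (hScl y) ?_
    intro x hx
    exact ⟨(x, y), hx, rfl⟩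
  have hSne : ∀ y ∈ Y, (S y).Nonempty := by
    intro y hy
    rw [hY] at hy
    obtain ⟨p, hp, rfl⟩ := hy
    exact ⟨p.1, by simpa [hSdef] using hp⟩
  have hYmem : ∀ w ∈ K, w.2 ∈ Y := by
    intro w hw; rw [hY]; exact ⟨w, hw, rfl⟩
  -- interior point and ball in slice S y₀
  obtain ⟨x₀, hx₀i⟩ := hint y₀ hy₀
  have hx₀S : x₀ ∈ S y₀ := interior_subset hx₀i
  obtain ⟨r, hr, hballr⟩ := Metric.mem_nhds_iff.mp (mem_interior_iff_mem_nhds.mp hx₀i)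
  set ρ : ℝ := r / 2 with hρdef
  have hρ : 0 < ρ := by positivity
  have hball : ∀ v : Fin n → ℝ, ‖v‖ ≤ ρ → x₀ + v ∈ S y₀ := by
    intro v hv
    apply hballr
    rw [Metric.mem_ball, dist_eq_norm]
    have : x₀ + v - x₀ = v := by abel
    rw [this]
    calc ‖v‖ ≤ ρ := hv
      _ < r := by rw [hρdef]; linarith
  -- affine extension of f
  have haff' : ∀ x₁ ∈ S y₀, ∀ x₂ ∈ S y₀, ∀ t ∈ Set.Icc (0:ℝ) 1,
      f (t • x₁ + (1 - t) • x₂) = t * f x₁ + (1 - t) * f x₂ := by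
    intro x₁ h₁ x₂ h₂ t ht
    exact hfaff x₁ x₂ h₁ h₂ t ht
  obtain ⟨c, hc⟩ := aux_affine_ext (S y₀) f x₀ ρ hρ hx₀S hball haff'
  set A : (Fin n → ℝ) → ℝ := fun x => f x₀ + ∑ i, (x i - x₀ i) * c i with hAdef
  have hAf : ∀ x ∈ S y₀, f x = A x := hc
  have hAcont : Continuous A := by
    apply continuous_const.add
    apply continuous_finset_sum
    intro i _
    exact ((continuous_apply i).sub continuous_const).mul continuous_const
  have hAaff : ∀ (x₁ x₂ : Fin n → ℝ) (t : ℝ),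
      A (t • x₁ + (1 - t) • x₂) = t * A x₁ + (1 - t) * A x₂ := by
    intro x₁ x₂ t
    simp only [hAdef]
    have hterm : ∀ i : Fin n,
        ((t • x₁ + (1 - t) • x₂) i - x₀ i) * c i
          = t * ((x₁ i - x₀ i) * c i) + (1 - t) * ((x₂ i - x₀ i) * c i) := by
      intro i
      simp only [Pi.add_apply, Pi.smul_apply, smul_eq_mul]
      ring
    rw [Finset.sum_congr rfl (fun i _ => hterm i), Finset.sum_add_distrib,
      ← Finset.mul_sum, ← Finset.mul_sum]
    ring
  -- the minimum function
  set M : (Fin m → ℝ) → ℝ := fun y => sInf (A '' S y) with hMdef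
  have hbdd : ∀ y, BddBelow (A '' S y) := fun y =>
    ((hScomp y).image hAcont).bddBelow
  have hmle : ∀ y, ∀ x ∈ S y, M y ≤ A x := by
    intro y x hx
    exact csInf_le (hbdd y) ⟨x, hx, rfl⟩
  have hattain : ∀ y ∈ Y, ∃ x ∈ S y, A x = M y := by
    intro y hy
    obtain ⟨x, hxS, hmin⟩ := (hScomp y).exists_isMinOn (hSne y hy) hAcont.continuousOn
    refine ⟨x, hxS, ?_⟩
    have : IsLeast (A '' S y) (A x) := by
      constructor
      · exact ⟨x, hxS, rfl⟩
      · rintro _ ⟨x', hx', rfl⟩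
        exact hmin hx'
    exact (this.csInf_eq).symm
  have hM0 : 0 ≤ M y₀ := by
    obtain ⟨x, hxS, hAx⟩ := hattain y₀ hy₀
    rw [← hAx, ← hAf x hxS]
    exact hfpos x hxS
  clear_value A M
  -- sequential continuity of M on Y
  have hmseq : ∀ y ∈ Y, ∀ yk : ℕ → (Fin m → ℝ), (∀ k, yk k ∈ Y) →
      Tendsto yk atTop (𝓝 y) →
      Tendsto (fun k => M (yk k)) atTop (𝓝 (M y)) := by
    intro y hy yk hykY hyk
    rw [Metric.tendsto_atTop]
    intro ε hε
    have hupper : ∀ᶠ k in atTop, M (yk k) < M y + ε := by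
      obtain ⟨x, hxS, hAx⟩ := hattain y hy
      obtain ⟨z, hz⟩ := hint y hy
      have hcont : ContinuousAt (fun t : ℝ => A (t • z + (1 - t) • x)) 0 := by
        apply Continuous.continuousAt
        apply hAcont.comp
        exact (continuous_id.smul continuous_const).add
          ((continuous_const.sub continuous_id).smul continuous_const)
      obtain ⟨δ, hδ, hδ'⟩ := Metric.continuousAt_iff.mp hcont (ε/2) (by linarith)
      set t : ℝ := min (δ/2) 1 with htdef
      have ht0 : 0 < t := lt_min (by linarith) one_pos
      have ht1 : t ≤ 1 := min_le_right _ _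
      have htδ : dist t 0 < δ := by
        rw [Real.dist_eq, sub_zero, abs_of_pos ht0]
        calc t ≤ δ/2 := min_le_left _ _
          _ < δ := by linarith
      have hval := hδ' htδ
      have h00 : (0:ℝ) • z + (1 - (0:ℝ)) • x = x := by module
      rw [Real.dist_eq, h00] at hval
      set x' : Fin n → ℝ := t • z + (1 - t) • x with hx'def
      have hlt : A x' < M y + ε := by
        obtain ⟨h1, h2⟩ := abs_lt.mp hval
        rw [hAx] at h2
        linarith
      have hx'int : x' ∈ interior (S y) :=
        (hconv y).combo_interior_self_mem_interior hz hxS ht0 (by linarith) (by ring)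
      obtain ⟨xk, hxkint, hxk⟩ := hlhc y hy yk hykY hyk x' hx'int
      have htend : Tendsto (fun k => A (xk k)) atTop (𝓝 (A x')) :=
        (hAcont.tendsto _).comp hxk
      filter_upwards [htend.eventually_lt_const hlt] with k hk
      exact lt_of_le_of_lt (hmle (yk k) (xk k) (interior_subset (hxkint k))) hk
    have hlower : ∀ᶠ k in atTop, M y - ε < M (yk k) := by
      by_contra hcon
      rw [Filter.not_eventually] at hcon
      have hfreq : ∃ᶠ k in atTop, M (yk k) ≤ M y - ε := hcon.mono fun k hk => not_lt.mp hk
      obtain ⟨φ, hφ, hφ'⟩ := Filter.extraction_of_frequently_atTop hfreq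
      choose x hxS hAx using fun k => hattain (yk (φ k)) (hykY (φ k))
      have hpairs : ∀ k, (x k, yk (φ k)) ∈ K := fun k => hxS k
      obtain ⟨q, hqK, ψ, hψ, hqt⟩ := hKc.tendsto_subseq hpairs
      have hy2 : Tendsto (fun k => yk (φ (ψ k))) atTop (𝓝 q.2) :=
        (continuous_snd.tendsto q).comp hqt
      have hy2' : Tendsto (fun k => yk (φ (ψ k))) atTop (𝓝 y) :=
        hyk.comp ((hφ.comp hψ).tendsto_atTop)
      have hq2 : q.2 = y := tendsto_nhds_unique hy2 hy2'
      have hq1 : q.1 ∈ S y := by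
        rw [← hq2]
        simpa [hSdef] using hqK
      have h1 : Tendsto (fun k => A (x (ψ k))) atTop (𝓝 (A q.1)) :=
        (hAcont.tendsto _).comp ((continuous_fst.tendsto q).comp hqt)
      have h2 : A q.1 ≤ M y - ε :=
        le_of_tendsto h1 (Filter.Eventually.of_forall fun k => by
          rw [hAx (ψ k)]; exact hφ' (ψ k))
      have h3 := hmle y q.1 hq1
      linarith
    rw [Filter.eventually_atTop] at hupper hlower
    obtain ⟨N₁, hN₁⟩ := hupper
    obtain ⟨N₂, hN₂⟩ := hlower
    refine ⟨max N₁ N₂, fun k hk => ?_⟩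
    rw [Real.dist_eq, abs_lt]
    constructor
    · have := hN₂ k (le_trans (le_max_right _ _) hk)
      linarith
    · have := hN₁ k (le_trans (le_max_left _ _) hk)
      linarith
  -- continuity within Y
  have hmcont : ∀ y ∈ Y, ContinuousWithinAt M Y y := by
    intro y hy
    rw [ContinuousWithinAt]
    refine Filter.tendsto_iff_seq_tendsto.mpr ?_
    intro u hu
    have huY : ∀ᶠ k in atTop, u k ∈ Y := hu.eventually eventually_mem_nhdsWithin
    obtain ⟨N, hN⟩ := Filter.eventually_atTop.mp huY
    have hu' : Tendsto u atTop (𝓝 y) := hu.mono_right nhdsWithin_le_nhds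
    have := hmseq y hy (fun k => u (k + N)) (fun k => hN _ (Nat.le_add_left _ _))
      (hu'.comp (tendsto_add_atTop_nat N))
    exact (tendsto_add_atTop_iff_nat N).mp this
  -- the extension
  refine ⟨fun w => A w.1 + max 0 (-(M w.2)), ?_, ?_, ?_, ?_⟩
  · -- continuity
    intro w hw
    have h1 : ContinuousWithinAt (fun w : (Fin n → ℝ) × (Fin m → ℝ) => M w.2) K w :=
      (hmcont w.2 (hYmem w hw)).comp continuous_snd.continuousWithinAt
        (fun p hp => hYmem p hp)
    exact ((hAcont.comp continuous_fst).continuousWithinAt).add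
      (continuousWithinAt_const.max h1.neg)
  · -- affine in x
    intro y x₁ x₂ h₁ h₂ t ht
    simp only
    rw [hAaff x₁ x₂ t]
    ring
  · -- nonnegative
    intro w hw
    have h1 : M w.2 ≤ A w.1 := hmle w.2 w.1 (by simpa [hSdef] using hw)
    have h2 : -(M w.2) ≤ max 0 (-(M w.2)) := le_max_right _ _
    simp only
    linarith
  · -- restriction to the slice
    intro x hx
    simp only
    rw [max_eq_left (by linarith : -(M y₀) ≤ 0), ← hAf x hx]
    ring
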